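/- Let H be a real Hilbert space and μ a Borel probability measure on H that is nonatomic (μ({x}) = 0 for every x) and is not supported on any line (there is no pair a, b ∈ H with μ({a + t·b : t ∈ ℝ}) = 1). Then the spatial distribution map S(x) = ∫ u(x − y) dμ(y), with u the spatial sign function, is strictly monotone: for all x ≠ y, ⟨S(x) − S(y), x − y⟩ > 0. In particular, S is injective. -/

import Mathlib

open MeasureTheory

section Aux

variable {H : Type*} [NormedAddCommGroup H] [InnerProductSpace ℝ H]

private lemma sd_expand (a b : H) (ha : a ≠ 0) (hb : b ≠ 0) :
    (inner ℝ (‖a‖⁻¹ • a - ‖b‖⁻¹ • b) (a - b) : ℝ)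
      = (‖a‖⁻¹ + ‖b‖⁻¹) * (‖a‖ * ‖b‖ - inner ℝ a b) := by
  have hna : ‖a‖ ≠ 0 := norm_ne_zero_iff.mpr ha
  have hnb : ‖b‖ ≠ 0 := norm_ne_zero_iff.mpr hb
  rw [inner_sub_left, inner_sub_right, inner_sub_right, real_inner_smul_left,
    real_inner_smul_left, real_inner_smul_left, real_inner_smul_left,
    real_inner_self_eq_norm_mul_norm, real_inner_self_eq_norm_mul_norm,
    real_inner_comm b a]
  field_simp
  ring

private lemma sd_nonneg (a b : H) :
    0 ≤ (inner ℝ (‖a‖⁻¹ • a - ‖b‖⁻¹ • b) (a - b) : ℝ) := by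
  rcases eq_or_ne a 0 with rfl | ha
  · rcases eq_or_ne b 0 with rfl | hb
    · simp
    · have : (inner ℝ ((0:H) - ‖b‖⁻¹ • b) ((0:H) - b) : ℝ) = ‖b‖⁻¹ * (‖b‖ * ‖b‖) := by
        rw [zero_sub, zero_sub, inner_neg_neg, real_inner_smul_left,
          real_inner_self_eq_norm_mul_norm]
      rw [norm_zero, inv_zero, zero_smul, this]
      positivity
  · rcases eq_or_ne b 0 with rfl | hb
    · have : (inner ℝ (‖a‖⁻¹ • a - (0:H)) (a - 0) : ℝ) = ‖a‖⁻¹ * (‖a‖ * ‖a‖) := by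
        rw [sub_zero, sub_zero, real_inner_smul_left, real_inner_self_eq_norm_mul_norm]
      rw [norm_zero, inv_zero, zero_smul, this]
      positivity
    · rw [sd_expand a b ha hb]
      have h1 : (0:ℝ) ≤ ‖a‖⁻¹ + ‖b‖⁻¹ := by positivity
      have h2 : (0:ℝ) ≤ ‖a‖ * ‖b‖ - inner ℝ a b := sub_nonneg.mpr (real_inner_le_norm a b)
      exact mul_nonneg h1 h2

end Aux

/-- If `μ` is a nonatomic Borel probability measure on a real Hilbert space that is
not supported on any line, then the spatial distribution map
`S(x) = ∫ u(x − y) dμ(y)` is strictly monotone; in particular it is injective. -/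
theorem spatial_distribution_strictly_monotone {H : Type*} [NormedAddCommGroup H]
    [InnerProductSpace ℝ H] [CompleteSpace H] [MeasurableSpace H] [BorelSpace H]
    [SecondCountableTopology H] (μ : Measure H) [IsProbabilityMeasure μ]
    (hna : ∀ x : H, μ {x} = 0)
    (hline : ¬ ∃ a b : H, μ {p : H | ∃ t : ℝ, p = a + t • b} = 1)
    (S : H → H) (hS : ∀ x, S x = ∫ y, ‖x - y‖⁻¹ • (x - y) ∂μ) :
    (∀ x y : H, x ≠ y → 0 < @inner ℝ H _ (S x - S y) (x - y)) ∧
      Function.Injective S := by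
  have hint : ∀ w : H, Integrable (fun z => ‖w - z‖⁻¹ • (w - z)) μ := by
    intro w
    have hm : Measurable fun z : H => ‖w - z‖⁻¹ • (w - z) :=
      ((measurable_const.sub measurable_id).norm.inv).smul (measurable_const.sub measurable_id)
    refine (integrable_const (1:ℝ)).mono' hm.aestronglyMeasurable (ae_of_all _ ?_)
    intro z
    rcases eq_or_ne (w - z) 0 with h | h
    · simp [h]
    · rw [norm_smul, norm_inv, norm_norm, inv_mul_cancel₀ (norm_ne_zero_iff.mpr h)]
  have main : ∀ x y : H, x ≠ y → 0 < @inner ℝ H _ (S x - S y) (x - y) := by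
    intro x y hxy
    by_contra hcon
    push_neg at hcon
    set g : H → H := fun z => ‖x - z‖⁻¹ • (x - z) - ‖y - z‖⁻¹ • (y - z) with hg
    have hgint : Integrable g μ := (hint x).sub (hint y)
    have hSxy : S x - S y = ∫ z, g z ∂μ := by
      rw [hS x, hS y, ← integral_sub (hint x) (hint y)]
    set f : H → ℝ := fun z => inner ℝ (g z) (x - y) with hf
    have habs : ∀ z : H, (x - z) - (y - z) = x - y := by intro z; abel
    have hf_nonneg : ∀ z, 0 ≤ f z := by
      intro z
      have := sd_nonneg (x - z) (y - z)
      rwa [habs z] at this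
    have hfint : Integrable f μ := hgint.inner_const (x - y)
    have hinner : @inner ℝ H _ (S x - S y) (x - y) = ∫ z, f z ∂μ := by
      rw [hSxy, real_inner_comm, ← integral_inner hgint (x - y)]
      simp only [hf, real_inner_comm]
    have hzero : ∫ z, f z ∂μ = 0 :=
      le_antisymm (hinner ▸ hcon) (integral_nonneg hf_nonneg)
    have hae : f =ᵐ[μ] 0 := (integral_eq_zero_iff_of_nonneg hf_nonneg hfint).mp hzero
    -- the line through x and y
    set L : Set H := {p : H | ∃ t : ℝ, p = x + t • (y - x)} with hL
    have hsub : {z : H | f z = 0} ⊆ L := by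
      intro z hz
      rcases eq_or_ne z x with rfl | hzx
      · exact ⟨0, by simp⟩
      rcases eq_or_ne z y with rfl | hzy
      · exact ⟨1, by simp⟩
      have ha : x - z ≠ 0 := sub_ne_zero.mpr (Ne.symm hzx)
      have hb : y - z ≠ 0 := sub_ne_zero.mpr (Ne.symm hzy)
      have hfz : f z = 0 := hz
      rw [hf] at hfz
      simp only [hg] at hfz
      rw [← habs z, sd_expand (x - z) (y - z) ha hb] at hfz
      have hra : (0:ℝ) < ‖x - z‖ := norm_pos_iff.mpr ha
      have hrb : (0:ℝ) < ‖y - z‖ := norm_pos_iff.mpr hb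
      have hpos : (0:ℝ) < ‖x - z‖⁻¹ + ‖y - z‖⁻¹ := by positivity
      have heq : (inner ℝ (x - z) (y - z) : ℝ) = ‖x - z‖ * ‖y - z‖ := by
        have := (mul_eq_zero.mp hfz).resolve_left (ne_of_gt hpos)
        linarith [this]
      have hpar : ‖y - z‖ • (x - z) = ‖x - z‖ • (y - z) :=
        inner_eq_norm_mul_iff_real.mp heq
      set r : ℝ := ‖x - z‖ with hr
      set s : ℝ := ‖y - z‖ with hs
      have hrs : r - s ≠ 0 := by
        intro h
        rw [sub_eq_zero] at h
        have hs0 : s ≠ 0 := norm_ne_zero_iff.mpr hb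
        have hsz : s • (x - z) = s • (y - z) := by rw [hpar, h]
        exact hxy (sub_left_inj.mp (smul_right_injective H hs0 hsz))
      refine ⟨r / (r - s), smul_right_injective H hrs ?_⟩
      show (r - s) • z = (r - s) • (x + (r / (r - s)) • (y - x))
      have h1 : (r - s) • z = r • y - s • x := by
        linear_combination (norm := module) hpar
      rw [h1]
      have hmul : (r - s) * (r / (r - s)) = r := by
        field_simp
      rw [smul_add, smul_smul, hmul]
      module
    have hcompl : μ Lᶜ = 0 := by
      have h1 : μ {z : H | f z ≠ 0} = 0 := by
        have := hae
        rw [Filter.EventuallyEq, ae_iff] at this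
        simpa using this
      refine measure_mono_null ?_ h1
      intro z hz
      exact fun h => hz (hsub h)
    have hL1 : μ L = 1 := by
      have hle : (1 : ENNReal) ≤ μ L := by
        have : μ Set.univ ≤ μ L + μ Lᶜ := by
          rw [← Set.union_compl_self L]; exact measure_union_le L Lᶜ
        rwa [measure_univ, hcompl, add_zero] at this
      exact le_antisymm prob_le_one hle
    exact hline ⟨x, y - x, hL1⟩
  refine ⟨main, ?_⟩
  intro x y hSeq
  by_contra hne
  have := main x y hne
  rw [hSeq, sub_self] at this
  simp at this
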